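/- If U₁ and U₂ are unitary operators on Hilbert spaces H₁ and H₂ respectively, and U₁ is a quasi-affine transform of U₂ (there exists a quasi-affinity Λ : H₁ → H₂ with U₂Λ = ΛU₁), then U₁ and U₂ are unitarily equivalent. -/

import Mathlib

open scoped InnerProductSpace
open ContinuousLinearMap

lemma commute_cfc_of_commute {H : Type*} [NormedAddCommGroup H] [InnerProductSpace ℂ H]
    [CompleteSpace H] (a b : H →L[ℂ] H) (ha : IsSelfAdjoint a) (hab : Commute b a)
    (f : ℝ → ℝ) (hf : Continuous f) : Commute b (cfc f a) := by
  rw [cfc_apply f a ha hf.continuousOn]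
  set s : Set ℝ := spectrum ℝ a
  suffices hall : ∀ g : C(s, ℝ), Commute b (cfcHom ha g) from hall _
  intro g
  induction g using
      ContinuousMap.induction_on_of_compact with
  | const r =>
      have : (ContinuousMap.const s r) = algebraMap ℝ C(s, ℝ) r := rfl
      rw [this, AlgHomClass.commutes]
      exact (Algebra.commutes r b).symm
  | id => rw [cfcHom_id ha]; exact hab
  | star_id => rw [star_trivial, cfcHom_id ha]; exact hab
  | add f g hfc hgc => rw [map_add]; exact hfc.add_right hgc
  | mul f g hfc hgc => rw [map_mul]; exact hfc.mul_right hgc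
  | frequently g hg =>
      have hcl : IsClosed {g : C(s, ℝ) | Commute b (cfcHom ha g)} := by
        simp only [Commute, SemiconjBy]
        exact isClosed_eq
          (continuous_mul_left b |>.comp (cfcHom_isClosedEmbedding ha).continuous)
          (continuous_mul_right b |>.comp (cfcHom_isClosedEmbedding ha).continuous)
      exact hcl.closure_subset (mem_closure_iff_frequently.mpr hg)

/-- If a unitary `U₁` is a quasi-affine transform of a unitary `U₂`
(i.e. there is a quasi-affinity `Λ : H₁ → H₂` with `U₂ Λ = Λ U₁`), then `U₁` and `U₂`
are unitarily equivalent. -/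
theorem quasi_similar_unitaries_unitarily_equivalent
    {H₁ H₂ : Type*}
    [NormedAddCommGroup H₁] [InnerProductSpace ℂ H₁] [CompleteSpace H₁]
    [NormedAddCommGroup H₂] [InnerProductSpace ℂ H₂] [CompleteSpace H₂]
    (U₁ : H₁ ≃ₗᵢ[ℂ] H₁) (U₂ : H₂ ≃ₗᵢ[ℂ] H₂)
    (Λ : H₁ →L[ℂ] H₂)
    (hΛinj : Function.Injective Λ) (hΛdense : Dense (Set.range Λ))
    (hint : ∀ x, U₂ (Λ x) = Λ (U₁ x)) :
    ∃ V : H₁ ≃ₗᵢ[ℂ] H₂, ∀ x, U₂ (V x) = V (U₁ x) := by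
  classical
  -- the adjoint intertwines the other way
  have hadj : ∀ y, adjoint Λ (U₂ y) = U₁ (adjoint Λ y) := by
    intro y
    apply ext_inner_right ℂ
    intro x
    have h1 : (⟪adjoint Λ (U₂ y), x⟫_ℂ) = ⟪U₂ y, Λ x⟫_ℂ := adjoint_inner_left Λ x (U₂ y)
    have h2 : U₂.symm (Λ x) = Λ (U₁.symm x) := by
      apply U₂.injective
      rw [U₂.apply_symm_apply, hint, U₁.apply_symm_apply]
    calc (⟪adjoint Λ (U₂ y), x⟫_ℂ) = ⟪U₂ y, Λ x⟫_ℂ := h1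
      _ = ⟪U₂ y, U₂ (U₂.symm (Λ x))⟫_ℂ := by rw [U₂.apply_symm_apply]
      _ = ⟪y, U₂.symm (Λ x)⟫_ℂ := U₂.inner_map_map _ _
      _ = ⟪y, Λ (U₁.symm x)⟫_ℂ := by rw [h2]
      _ = ⟪adjoint Λ y, U₁.symm x⟫_ℂ := (adjoint_inner_left Λ _ y).symm
      _ = ⟪U₁ (adjoint Λ y), U₁ (U₁.symm x)⟫_ℂ := (U₁.inner_map_map _ _).symm
      _ = ⟪U₁ (adjoint Λ y), x⟫_ℂ := by rw [U₁.apply_symm_apply]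
  set T : H₁ →L[ℂ] H₁ := adjoint Λ ∘L Λ with hTdef
  have hTapp : ∀ x, T x = adjoint Λ (Λ x) := fun _ => rfl
  have hTpos : T.IsPositive := by
    exact isPositive_adjoint_comp_self Λ
  have hTsa : IsSelfAdjoint T := hTpos.isSelfAdjoint
  -- U₁ as a continuous linear map
  set b : H₁ →L[ℂ] H₁ := (U₁ : H₁ →L[ℂ] H₁) with hbdef
  have hbapp : ∀ x, b x = U₁ x := fun _ => rfl
  have hcomm : Commute b T := by
    ext x
    change b (T x) = T (b x)
    simp only [hbapp, hTapp]
    rw [← hint, hadj]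
  -- square root of T
  set S : H₁ →L[ℂ] H₁ := cfc Real.sqrt T with hSdef
  have hSsa : IsSelfAdjoint S := cfc_predicate _ _
  have hSsq : S * S = T := by
    rw [hSdef, ← cfc_mul Real.sqrt Real.sqrt T
      Real.continuous_sqrt.continuousOn Real.continuous_sqrt.continuousOn]
    have : cfc (fun x => Real.sqrt x * Real.sqrt x) T = cfc (fun x : ℝ => x) T := by
      apply cfc_congr
      intro x hx
      exact Real.mul_self_sqrt (spectrum_nonneg_of_nonneg
        ((nonneg_iff_isPositive T).mpr hTpos) hx)
    rw [this, cfc_id' ℝ T]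
  have hSadj : ∀ x y, (⟪S x, y⟫_ℂ) = ⟪x, S y⟫_ℂ := fun x y => by
    nth_rewrite 1 [← hSsa.adjoint_eq]
    exact adjoint_inner_left S y x
  have hSsq' : ∀ x, S (S x) = T x := fun x => by
    rw [← hSsq]; rfl
  -- commutation of U₁ with S
  have hbS : Commute b S := commute_cfc_of_commute T b hTsa hcomm Real.sqrt Real.continuous_sqrt
  have hbSapp : ∀ x, U₁ (S x) = S (U₁ x) := by
    intro x
    have := congrFun (congrArg DFunLike.coe hbS) x
    simpa [mul_apply, hbapp] using this
  -- norm identity ‖S x‖ = ‖Λ x‖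
  have hnorm : ∀ x, ‖S x‖ = ‖Λ x‖ := by
    intro x
    have h1 : (⟪S x, S x⟫_ℂ) = ⟪Λ x, Λ x⟫_ℂ := by
      rw [hSadj, hSsq', hTapp, adjoint_inner_right]
    have h2 := congrArg (RCLike.re (K := ℂ)) h1
    rw [inner_self_eq_norm_sq (𝕜 := ℂ), inner_self_eq_norm_sq (𝕜 := ℂ)] at h2
    rw [← Real.sqrt_sq (norm_nonneg (S x)), ← Real.sqrt_sq (norm_nonneg (Λ x)), h2]
  -- injectivity of S
  have hSinj : Function.Injective S := by
    intro x y hxy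
    have hS0 : S (x - y) = 0 := by rw [map_sub, hxy, sub_self]
    have h0 : ‖Λ (x - y)‖ = 0 := by rw [← hnorm, hS0, norm_zero]
    have hΛ0 : Λ (x - y) = Λ 0 := by rw [map_zero]; exact norm_eq_zero.mp h0
    exact sub_eq_zero.mp (hΛinj hΛ0)
  -- dense range of S
  have hSdense : Dense (Set.range S) := by
    have hset : Set.range ⇑S = ((LinearMap.range (S : H₁ →ₗ[ℂ] H₁)) : Set H₁) := by
      rw [LinearMap.coe_range]
      rfl
    rw [hset]
    have : (LinearMap.range (S : H₁ →ₗ[ℂ] H₁)).topologicalClosure = ⊤ := by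
      rw [Submodule.topologicalClosure_eq_top_iff]
      rw [Submodule.eq_bot_iff]
      intro y hy
      have hSy : S y = 0 := by
        have h1 : (⟪S (S y), y⟫_ℂ) = 0 :=
          hy (S (S y)) (LinearMap.mem_range.mpr ⟨S y, rfl⟩)
        have h2 : (⟪S y, S y⟫_ℂ) = 0 := by rwa [hSadj] at h1
        exact inner_self_eq_zero.mp h2
      have h0 : ‖Λ y‖ = 0 := by rw [← hnorm, hSy, norm_zero]
      have hΛ0 : Λ y = Λ 0 := by rw [map_zero]; exact norm_eq_zero.mp h0
      simpa using hΛinj hΛ0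
    exact Submodule.dense_iff_topologicalClosure_eq_top.mpr this
  -- equality on a dense set extends
  have dense_ext : ∀ (f g : H₁ → H₂), Continuous f → Continuous g →
      (∀ x, f (S x) = g (S x)) → ∀ y, f y = g y := by
    intro f g hf hg hfg y
    have hcl : IsClosed {y : H₁ | f y = g y} := isClosed_eq hf hg
    have hsub : Set.range ⇑S ⊆ {y : H₁ | f y = g y} := by
      rintro - ⟨x, rfl⟩; exact hfg x
    have := hcl.closure_subset_iff.mpr hsub
    exact this (by rw [hSdense.closure_eq]; trivial)
  -- construct the isometry on the range of S
  set D : Submodule ℂ H₁ := LinearMap.range (S : H₁ →ₗ[ℂ] H₁) with hDdef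
  have hSinj' : Function.Injective (S : H₁ →ₗ[ℂ] H₁) := hSinj
  set eqS : H₁ ≃ₗ[ℂ] D := LinearEquiv.ofInjective (S : H₁ →ₗ[ℂ] H₁) hSinj' with heqS
  have heqS_coe : ∀ x : H₁, ((eqS x : D) : H₁) = S x := fun x => rfl
  set V₀lin : D →ₗ[ℂ] H₂ := (Λ : H₁ →ₗ[ℂ] H₂) ∘ₗ (eqS.symm : D →ₗ[ℂ] H₁) with hV₀lin
  have hV₀app : ∀ x : H₁, V₀lin (eqS x) = Λ x := by
    intro x
    simp [hV₀lin, LinearEquiv.symm_apply_apply]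
  have hV₀norm : ∀ d : D, ‖V₀lin d‖ = ‖d‖ := by
    intro d
    obtain ⟨x, rfl⟩ := eqS.surjective d
    rw [hV₀app]
    have : ‖(eqS x : D)‖ = ‖S x‖ := by rw [← heqS_coe x]; rfl
    rw [this, hnorm]
  set V₀ : D →ₗᵢ[ℂ] H₂ := ⟨V₀lin, hV₀norm⟩ with hV₀
  have h_e : IsUniformInducing (D.subtypeL : D →L[ℂ] H₁) :=
    isometry_subtype_coe.isUniformInducing
  have h_dense : DenseRange (D.subtypeL : D →L[ℂ] H₁) := by
    have h1 : Set.range (D.subtypeL : D →L[ℂ] H₁) = (D : Set H₁) := Subtype.range_coe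
    have h2 : (D : Set H₁) = Set.range ⇑S := by
      rw [hDdef, LinearMap.coe_range]; rfl
    rw [DenseRange, h1, h2]
    exact hSdense
  set Vc : H₁ →L[ℂ] H₂ :=
    V₀.toContinuousLinearMap.extend D.subtypeL with hVc
  have hVcS : ∀ x, Vc (S x) = Λ x := by
    intro x
    have h1 : (D.subtypeL : D →L[ℂ] H₁) (eqS x) = S x := heqS_coe x
    have h2 := ContinuousLinearMap.extend_eq (f := V₀.toContinuousLinearMap) (e := D.subtypeL)
      h_dense h_e (eqS x)
    rw [h1] at h2
    exact h2.trans (hV₀app x)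
  -- Vc is an isometry
  have hVcnorm : ∀ y, ‖Vc y‖ = ‖y‖ := by
    intro y
    have hcl : IsClosed {y : H₁ | ‖Vc y‖ = ‖y‖} :=
      isClosed_eq Vc.continuous.norm continuous_norm
    have hsub : Set.range ⇑S ⊆ {y : H₁ | ‖Vc y‖ = ‖y‖} := by
      rintro - ⟨x, rfl⟩
      show ‖Vc (S x)‖ = ‖S x‖
      rw [hVcS, hnorm]
    exact hcl.closure_subset_iff.mpr hsub (by rw [hSdense.closure_eq]; trivial)
  set VLI : H₁ →ₗᵢ[ℂ] H₂ := ⟨(Vc : H₁ →ₗ[ℂ] H₂), hVcnorm⟩ with hVLI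
  have hVLIapp : ∀ y, VLI y = Vc y := fun _ => rfl
  -- surjectivity
  have hsurj : Function.Surjective VLI := by
    rw [← Set.range_eq_univ]
    have hclosed : IsClosed (Set.range ⇑VLI) :=
      VLI.isometry.isClosedEmbedding.isClosed_range
    have hsub : Set.range ⇑Λ ⊆ Set.range ⇑VLI := by
      rintro - ⟨x, rfl⟩
      exact ⟨S x, by rw [hVLIapp, hVcS]⟩
    have := hclosed.closure_subset_iff.mpr hsub
    rw [hΛdense.closure_eq] at this
    exact (this.antisymm (Set.subset_univ _)).symm
  refine ⟨LinearIsometryEquiv.ofSurjective VLI hsurj, ?_⟩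
  have hVapp : ∀ y, LinearIsometryEquiv.ofSurjective VLI hsurj y = Vc y := fun _ => rfl
  intro y
  rw [hVapp, hVapp]
  refine dense_ext (fun y => U₂ (Vc y)) (fun y => Vc (U₁ y))
    (U₂.continuous.comp Vc.continuous) (Vc.continuous.comp U₁.continuous) ?_ y
  intro x
  show U₂ (Vc (S x)) = Vc (U₁ (S x))
  rw [hVcS, hint, hbSapp, hVcS]
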